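/- Every finite simple MV-algebra is isomorphic to Łₙ for some positive natural number n; that is, if A is a finite simple MV-algebra, then there exist n ≥ 1 and a bijective homomorphism from A onto Łₙ. -/

import Mathlib

universe u v

/-- An MV-algebra: operations ⊕, ¬, 0 satisfying MV1–MV6. -/
structure MVAlgebra (A : Type u) where
  oplus : A → A → A
  neg : A → A
  zero : A
  mv1 : ∀ x y z, oplus (oplus x y) z = oplus x (oplus y z)
  mv2 : ∀ x y, oplus x y = oplus y x
  mv3 : ∀ x, oplus x zero = x
  mv4 : ∀ x, neg (neg x) = x
  mv5 : ∀ x, oplus x (neg zero) = neg zero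
  mv6 : ∀ x y, oplus (neg (oplus (neg x) y)) y = oplus (neg (oplus x (neg y))) x

/-- The carrier of the Łukasiewicz chain Łₙ : {k/n : k ∈ ℕ, 0 ≤ k ≤ n} ⊆ ℚ. -/
abbrev Luk (n : ℕ+) : Type := {x : ℚ // ∃ k : ℕ, k ≤ (n : ℕ) ∧ x = (k : ℚ) / (n : ℕ)}

/-- The constant 0 of Łₙ. -/
def lukZero (n : ℕ+) : Luk n := ⟨0, 0, Nat.zero_le _, by simp⟩

/-- The negation ¬x = 1 - x of Łₙ. -/
def lukNeg {n : ℕ+} (x : Luk n) : Luk n :=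
  ⟨1 - x.1, by
    obtain ⟨k, hk, hx⟩ := x.2
    refine ⟨(n : ℕ) - k, Nat.sub_le _ _, ?_⟩
    have hn : ((n : ℕ) : ℚ) ≠ 0 := by exact_mod_cast n.pos.ne'
    rw [hx, Nat.cast_sub hk, sub_div, div_self hn]⟩

/-- The truncated sum x ⊕ y = min 1 (x + y) of Łₙ. -/
def lukOplus {n : ℕ+} (x y : Luk n) : Luk n :=
  ⟨min 1 (x.1 + y.1), by
    obtain ⟨k, hk, hx⟩ := x.2
    obtain ⟨j, hj, hy⟩ := y.2
    refine ⟨min (n : ℕ) (k + j), min_le_left _ _, ?_⟩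
    have hn : (0 : ℚ) < ((n : ℕ) : ℚ) := by exact_mod_cast n.pos
    rw [hx, hy, ← add_div]
    rcases le_total (k + j) (n : ℕ) with h | h
    · rw [min_eq_right h, min_eq_right]
      · push_cast; ring_nf
      · rw [div_le_one hn]; exact_mod_cast h
    · rw [min_eq_left h, min_eq_left, div_self hn.ne']
      · rw [one_le_div hn]; exact_mod_cast h⟩

/-- A congruence of an MV-algebra: an equivalence relation compatible with ⊕ and ¬. -/
def IsMVCongruence {A : Type u} (M : MVAlgebra A) (θ : A → A → Prop) : Prop :=
  Equivalence θ ∧ (∀ a b c d, θ a b → θ c d → θ (M.oplus a c) (M.oplus b d)) ∧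
    ∀ a b, θ a b → θ (M.neg a) (M.neg b)

/-- A simple MV-algebra: it has exactly two congruences, equality and the all relation. -/
def IsSimpleMV {A : Type u} (M : MVAlgebra A) : Prop :=
  (fun a b : A => a = b) ≠ (fun _ _ => True) ∧
    ∀ θ, IsMVCongruence M θ → θ = (fun a b : A => a = b) ∨ θ = fun _ _ => True

namespace MVThm

variable {A : Type u} (M : MVAlgebra A)

/-- The top element 1 = ¬0. -/
def one : A := M.neg M.zero

/-- The natural order: x ≤ y iff ¬x ⊕ y = 1. -/
def mle (x y : A) : Prop := M.oplus (M.neg x) y = one M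

/-- Truncated difference x ⊖ y = ¬(¬x ⊕ y). -/
def msub (x y : A) : A := M.neg (M.oplus (M.neg x) y)

/-- Join. -/
def mjoin (x y : A) : A := M.oplus (msub M x y) y

/-- Meet. -/
def mmeet (x y : A) : A := M.neg (mjoin M (M.neg x) (M.neg y))

/-- n-fold sum. -/
def smul : ℕ → A → A
  | 0, _ => M.zero
  | k+1, x => M.oplus x (smul k x)

/-- Chang distance. -/
def dd (x y : A) : A := M.oplus (msub M x y) (msub M y x)

theorem oplus_one (x : A) : M.oplus x (one M) = one M := M.mv5 x

theorem one_oplus (x : A) : M.oplus (one M) x = one M := by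
  rw [M.mv2]; exact M.mv5 x

theorem zero_oplus (x : A) : M.oplus M.zero x = x := by
  rw [M.mv2]; exact M.mv3 x

theorem neg_one : M.neg (one M) = M.zero := M.mv4 M.zero

theorem neg_oplus_self (x : A) : M.oplus (M.neg x) x = one M := by
  have h := M.mv6 x (one M)
  rw [oplus_one, neg_one, M.mv3] at h
  exact h.symm

theorem oplus_left_comm (x y z : A) :
    M.oplus x (M.oplus y z) = M.oplus y (M.oplus x z) := by
  rw [← M.mv1, M.mv2 x y, M.mv1]

theorem mjoin_comm (x y : A) : mjoin M x y = mjoin M y x := by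
  unfold mjoin msub
  rw [M.mv6 x y, M.mv2 x (M.neg y)]

theorem mle_one (x : A) : mle M x (one M) := oplus_one M (M.neg x)

theorem zero_mle (x : A) : mle M M.zero x := one_oplus M x

theorem mle_refl (x : A) : mle M x x := neg_oplus_self M x

theorem mle_of_eq {x y : A} (h : x = y) : mle M x y := h ▸ mle_refl M x

theorem mjoin_eq_right {x y : A} (h : mle M x y) : mjoin M x y = y := by
  unfold mjoin msub
  rw [show M.oplus (M.neg x) y = one M from h, neg_one, zero_oplus]

theorem mle_antisymm {x y : A} (h1 : mle M x y) (h2 : mle M y x) : x = y := by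
  have hc := mjoin_comm M x y
  rw [mjoin_eq_right M h1, mjoin_eq_right M h2] at hc
  exact hc.symm

theorem mle_oplus (x z : A) : mle M x (M.oplus x z) := by
  show M.oplus (M.neg x) (M.oplus x z) = one M
  rw [← M.mv1, neg_oplus_self, one_oplus]

theorem mle_oplus_left (x z : A) : mle M x (M.oplus z x) := by
  rw [M.mv2]; exact mle_oplus M x z

theorem mle_iff_exists {x y : A} : mle M x y ↔ ∃ z, y = M.oplus x z := by
  constructor
  · intro hxy
    refine ⟨msub M y x, ?_⟩
    calc y = mjoin M x y := (mjoin_eq_right M hxy).symm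
    _ = mjoin M y x := mjoin_comm M x y
    _ = M.oplus x (msub M y x) := M.mv2 _ _
  · rintro ⟨z, rfl⟩; exact mle_oplus M x z

theorem mle_trans {x y z : A} (h1 : mle M x y) (h2 : mle M y z) : mle M x z := by
  obtain ⟨u, rfl⟩ := (mle_iff_exists M).mp h1
  obtain ⟨v, rfl⟩ := (mle_iff_exists M).mp h2
  rw [M.mv1]; exact mle_oplus M x _

theorem oplus_mle_oplus {x y u v : A} (h1 : mle M x y) (h2 : mle M u v) :
    mle M (M.oplus x u) (M.oplus y v) := by
  obtain ⟨a, rfl⟩ := (mle_iff_exists M).mp h1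
  obtain ⟨b, rfl⟩ := (mle_iff_exists M).mp h2
  refine (mle_iff_exists M).mpr ⟨M.oplus a b, ?_⟩
  rw [M.mv1, M.mv1, oplus_left_comm M a u b]

theorem neg_mle_neg_iff {x y : A} : mle M (M.neg y) (M.neg x) ↔ mle M x y := by
  unfold mle
  rw [M.mv4, M.mv2]

theorem mle_iff_msub_zero {x y : A} : mle M x y ↔ msub M x y = M.zero := by
  unfold mle msub
  constructor
  · intro hh; rw [hh, neg_one]
  · intro hh
    rw [← M.mv4 (M.oplus (M.neg x) y), hh]; rfl

theorem msub_oplus_mle (y z : A) : mle M (msub M (M.oplus y z) y) z := by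
  show M.oplus (M.neg (M.neg (M.oplus (M.neg (M.oplus y z)) y))) z = one M
  rw [M.mv4, M.mv1]
  exact neg_oplus_self M (M.oplus y z)

theorem msub_mono_left {x z : A} (h : mle M x z) (y : A) :
    mle M (msub M x y) (msub M z y) := by
  apply (neg_mle_neg_iff M).mpr
  exact oplus_mle_oplus M ((neg_mle_neg_iff M).mpr h) (mle_refl M y)

theorem mle_mjoin_right (x y : A) : mle M y (mjoin M x y) :=
  (mle_iff_exists M).mpr ⟨msub M x y, M.mv2 _ _⟩

theorem mle_mjoin_left (x y : A) : mle M x (mjoin M x y) := by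
  rw [mjoin_comm]; exact mle_mjoin_right M y x

theorem mle_oplus_msub (x y : A) : mle M x (M.oplus y (msub M x y)) := by
  have h := mle_mjoin_left M x y
  rwa [show mjoin M x y = M.oplus y (msub M x y) from M.mv2 _ _] at h

theorem msub_mle_iff {x y z : A} : mle M (msub M x y) z ↔ mle M x (M.oplus y z) := by
  constructor
  · intro hh
    exact mle_trans M (mle_oplus_msub M x y) (oplus_mle_oplus M (mle_refl M y) hh)
  · intro hh
    exact mle_trans M (msub_mono_left M hh y) (msub_oplus_mle M y z)

theorem mjoin_mle {x y z : A} (h1 : mle M x z) (h2 : mle M y z) :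
    mle M (mjoin M x y) z := by
  have step : mle M (mjoin M x y) (mjoin M z y) :=
    oplus_mle_oplus M (msub_mono_left M h1 y) (mle_refl M y)
  rw [mjoin_comm M z y, mjoin_eq_right M h2] at step
  exact step

theorem mmeet_le_left (x y : A) : mle M (mmeet M x y) x := by
  have h := (neg_mle_neg_iff M).mpr (mle_mjoin_left M (M.neg x) (M.neg y))
  rwa [M.mv4] at h

theorem mmeet_le_right (x y : A) : mle M (mmeet M x y) y := by
  have h := (neg_mle_neg_iff M).mpr (mle_mjoin_right M (M.neg x) (M.neg y))
  rwa [M.mv4] at h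

theorem mle_mmeet {x y z : A} (h1 : mle M z x) (h2 : mle M z y) :
    mle M z (mmeet M x y) := by
  have hj : mle M (mjoin M (M.neg x) (M.neg y)) (M.neg z) :=
    mjoin_mle M ((neg_mle_neg_iff M).mpr h1) ((neg_mle_neg_iff M).mpr h2)
  have h := (neg_mle_neg_iff M).mpr hj
  rwa [M.mv4] at h

theorem mmeet_comm (x y : A) : mmeet M x y = mmeet M y x := by
  unfold mmeet; rw [mjoin_comm]

theorem oplus_mmeet (x y z : A) :
    M.oplus x (mmeet M y z) = mmeet M (M.oplus x y) (M.oplus x z) := by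
  apply mle_antisymm
  · exact mle_mmeet M (oplus_mle_oplus M (mle_refl M x) (mmeet_le_left M y z))
      (oplus_mle_oplus M (mle_refl M x) (mmeet_le_right M y z))
  · have h1 : mle M (msub M (mmeet M (M.oplus x y) (M.oplus x z)) x) y :=
      mle_trans M (msub_mono_left M (mmeet_le_left M _ _) x) (msub_oplus_mle M x y)
    have h2 : mle M (msub M (mmeet M (M.oplus x y) (M.oplus x z)) x) z :=
      mle_trans M (msub_mono_left M (mmeet_le_right M _ _) x) (msub_oplus_mle M x z)
    exact mle_trans M (mle_oplus_msub M _ x)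
      (oplus_mle_oplus M (mle_refl M x) (mle_mmeet M h1 h2))

theorem mmeet_oplus_mle (w a c : A) :
    mle M (mmeet M w (M.oplus a c)) (M.oplus (mmeet M w a) (mmeet M w c)) := by
  have hhalf : mle M (mmeet M w (M.oplus a c)) (M.oplus (mmeet M w a) c) := by
    rw [M.mv2 (mmeet M w a) c, oplus_mmeet M c w a]
    apply mle_mmeet
    · exact mle_trans M (mmeet_le_left M _ _) (mle_oplus_left M w c)
    · rw [M.mv2 c a]; exact mmeet_le_right M _ _
  rw [oplus_mmeet M (mmeet M w a) w c]
  apply mle_mmeet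
  · exact mle_trans M (mmeet_le_left M _ _) (mle_oplus_left M w (mmeet M w a))
  · exact hhalf

theorem smul_add (a b : ℕ) (x : A) :
    smul M (a + b) x = M.oplus (smul M a x) (smul M b x) := by
  induction a with
  | zero => simp [smul, zero_oplus]
  | succ k ih =>
    have he : k + 1 + b = (k + b) + 1 := by omega
    rw [he]
    show M.oplus x (smul M (k + b) x) = M.oplus (M.oplus x (smul M k x)) (smul M b x)
    rw [ih, ← M.mv1]

theorem smul_mle (x : A) {a b : ℕ} (h : a ≤ b) : mle M (smul M a x) (smul M b x) := by
  obtain ⟨c, rfl⟩ := Nat.exists_eq_add_of_le h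
  rw [smul_add]; exact mle_oplus M _ _

theorem msub_self (x : A) : msub M x x = M.zero := by
  unfold msub; rw [neg_oplus_self, neg_one]

theorem dd_self (x : A) : dd M x x = M.zero := by
  unfold dd; rw [msub_self, M.mv3]

theorem dd_comm (x y : A) : dd M x y = dd M y x := M.mv2 _ _

theorem oplus_rearrange (a b c d : A) :
    M.oplus (M.oplus a b) (M.oplus c d) = M.oplus (M.oplus a c) (M.oplus b d) := by
  rw [M.mv1, oplus_left_comm M b c d, ← M.mv1]

theorem msub_triangle (x y z : A) :
    mle M (msub M x z) (M.oplus (msub M x y) (msub M y z)) := by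
  apply (msub_mle_iff M).mpr
  have h1 : mle M x (M.oplus y (msub M x y)) := mle_oplus_msub M x y
  have h2 : mle M (M.oplus y (msub M x y))
      (M.oplus (M.oplus z (msub M y z)) (msub M x y)) :=
    oplus_mle_oplus M (mle_oplus_msub M y z) (mle_refl M _)
  refine mle_trans M (mle_trans M h1 h2) (mle_of_eq M ?_)
  rw [M.mv1, M.mv2 (msub M y z) (msub M x y)]

theorem dd_triangle (x y z : A) :
    mle M (dd M x z) (M.oplus (dd M x y) (dd M y z)) := by
  have h := oplus_mle_oplus M (msub_triangle M x y z) (msub_triangle M z y x)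
  refine mle_trans M h (mle_of_eq M ?_)
  show M.oplus (M.oplus (msub M x y) (msub M y z)) (M.oplus (msub M z y) (msub M y x)) = _
  rw [oplus_rearrange M (msub M x y) (msub M y z) (msub M z y) (msub M y x)]
  unfold dd
  rw [M.mv2 (msub M y z) (msub M y x),
    oplus_rearrange M (msub M x y) (msub M z y) (msub M y x) (msub M y z),
    M.mv2 (msub M z y) (msub M y z)]

theorem msub_oplus_oplus (x u y v : A) :
    mle M (msub M (M.oplus x u) (M.oplus y v)) (M.oplus (msub M x y) (msub M u v)) := by
  apply (msub_mle_iff M).mpr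
  have h := oplus_mle_oplus M (mle_oplus_msub M x y) (mle_oplus_msub M u v)
  refine mle_trans M h (mle_of_eq M ?_)
  rw [oplus_rearrange]

theorem dd_oplus (x y u v : A) :
    mle M (dd M (M.oplus x u) (M.oplus y v)) (M.oplus (dd M x y) (dd M u v)) := by
  have h := oplus_mle_oplus M (msub_oplus_oplus M x u y v) (msub_oplus_oplus M y v x u)
  refine mle_trans M h (mle_of_eq M ?_)
  unfold dd
  rw [oplus_rearrange]

theorem msub_neg (x y : A) : msub M (M.neg x) (M.neg y) = msub M y x := by
  unfold msub; rw [M.mv4, M.mv2]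

theorem dd_neg (x y : A) : dd M (M.neg x) (M.neg y) = dd M x y := by
  unfold dd; rw [msub_neg, msub_neg, M.mv2]

theorem msub_zero (x : A) : msub M x M.zero = x := by
  unfold msub; rw [M.mv3, M.mv4]

theorem zero_msub (x : A) : msub M M.zero x = M.zero := by
  unfold msub
  rw [show M.oplus (M.neg M.zero) x = one M from one_oplus M x, neg_one]

theorem dd_zero (x : A) : dd M x M.zero = x := by
  unfold dd; rw [msub_zero, zero_msub, M.mv3]

theorem mle_zero_eq {x : A} (h : mle M x M.zero) : x = M.zero :=
  mle_antisymm M h (zero_mle M x)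

theorem idem_zero_or_one (hs : IsSimpleMV M) {e : A} (he : M.oplus e e = e) :
    e = M.zero ∨ e = one M := by
  classical
  set θ : A → A → Prop := fun a b => mle M (dd M a b) e with hθ
  have hcong : IsMVCongruence M θ := by
    refine ⟨⟨fun a => ?_, fun {a b} hab => ?_, fun {a b c} hab hbc => ?_⟩,
      fun a b c d h1 h2 => ?_, fun a b h1 => ?_⟩
    · show mle M (dd M a a) e
      rw [dd_self]; exact zero_mle M e
    · show mle M (dd M b a) e
      rw [dd_comm]; exact hab
    · show mle M (dd M a c) e
      have h := mle_trans M (dd_triangle M a b c) (oplus_mle_oplus M hab hbc)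
      rwa [he] at h
    · show mle M (dd M (M.oplus a c) (M.oplus b d)) e
      have hh := mle_trans M (dd_oplus M a b c d) (oplus_mle_oplus M h1 h2)
      rwa [he] at hh
    · show mle M (dd M (M.neg a) (M.neg b)) e
      rw [dd_neg]; exact h1
  rcases hs.2 θ hcong with hc | hc
  · left
    have h2 : θ e M.zero := by
      show mle M (dd M e M.zero) e
      rw [dd_zero]; exact mle_refl M e
    rw [hc] at h2; exact h2
  · right
    have h2 : θ (one M) M.zero := by rw [hc]; trivial
    have h3 : mle M (dd M (one M) M.zero) e := h2
    rw [dd_zero] at h3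
    exact mle_antisymm M (mle_one M e) h3

theorem arch (hs : IsSimpleMV M) [Finite A] {x : A} (hx : x ≠ M.zero) :
    ∃ k, smul M k x = one M ∧ 1 ≤ k := by
  obtain ⟨i, j, hne, heq⟩ := Finite.exists_ne_map_eq_of_infinite (fun k : ℕ => smul M k x)
  have key : ∃ a b : ℕ, a < b ∧ smul M a x = smul M b x := by
    rcases lt_or_gt_of_ne hne with hlt | hlt
    · exact ⟨i, j, hlt, heq⟩
    · exact ⟨j, i, hlt, heq.symm⟩
  obtain ⟨a, b, hab, hsm⟩ := key
  have h1 : smul M (a + 1) x = smul M a x :=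
    mle_antisymm M (by rw [hsm]; exact smul_mle M x (by omega)) (smul_mle M x (Nat.le_succ a))
  have stab : ∀ m, a ≤ m → smul M m x = smul M a x := by
    intro m hm
    induction m, hm using Nat.le_induction with
    | base => rfl
    | succ m hm ih =>
      show M.oplus x (smul M m x) = smul M a x
      rw [ih]
      exact h1
  have he : M.oplus (smul M a x) (smul M a x) = smul M a x := by
    rw [← smul_add]
    exact stab (a + a) (by omega)
  rcases idem_zero_or_one M hs he with h0 | h1'
  · exfalso
    apply hx
    apply mle_zero_eq M
    have hxe : mle M x (smul M a x) := by
      rw [← h1]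
      exact mle_oplus M x (smul M a x)
    rwa [h0] at hxe
  · exact ⟨a + 1, by rw [h1]; exact h1', by omega⟩

end MVThm

open MVThm in
/-- Every finite simple MV-algebra is isomorphic to Łₙ for some n ≥ 1. -/
theorem finite_simple_iso_luk {A : Type u} [Finite A] (M : MVAlgebra A)
    (h : IsSimpleMV M) :
    ∃ (n : ℕ+) (f : A → Luk n), Function.Bijective f ∧
      (∀ x y, f (M.oplus x y) = lukOplus (f x) (f y)) ∧
      (∀ x, f (M.neg x) = lukNeg (f x)) ∧
      f M.zero = lukZero n := by
  classical
  have hzne : M.zero ≠ one M := by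
    intro h0
    apply h.1
    have key : ∀ x : A, x = M.zero := by
      intro x
      have h1 := M.mv5 x
      rw [show M.neg M.zero = one M from rfl, ← h0, M.mv3] at h1
      exact h1
    funext a b
    exact propext ⟨fun _ => trivial, fun _ => (key a).trans (key b).symm⟩
  letI : PartialOrder A :=
    { le := mle M
      le_refl := mle_refl M
      le_trans := fun _ _ _ => mle_trans M
      le_antisymm := fun _ _ => mle_antisymm M }
  obtain ⟨p, hp0, hpmin⟩ := Set.Finite.exists_minimalFor (id : A → A)
    {x : A | x ≠ M.zero} (Set.toFinite _) ⟨one M, fun hh => hzne hh.symm⟩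
  obtain ⟨n₀, hn₀, -⟩ := arch M h hp0
  have meet_smul : ∀ y, mmeet M y p = M.zero → ∀ k, mmeet M y (smul M k p) = M.zero := by
    intro y h0 k
    induction k with
    | zero => exact mle_zero_eq M (mmeet_le_right M y M.zero)
    | succ k ih =>
      apply mle_zero_eq M
      have hh := mmeet_oplus_mle M y p (smul M k p)
      rwa [h0, ih, M.mv3] at hh
  have hple : ∀ y, y ≠ M.zero → mle M p y := by
    intro y hy
    by_cases hm : mmeet M p y = M.zero
    · exfalso
      have h1 : mmeet M y p = M.zero := by rw [mmeet_comm]; exact hm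
      have h2 := meet_smul y h1 n₀
      rw [hn₀] at h2
      have h3 : y = mmeet M y (one M) :=
        mle_antisymm M (mle_mmeet M (mle_refl M y) (mle_one M y)) (mmeet_le_left M y (one M))
      exact hy (h3.trans h2)
    · have he : id p = id (mmeet M p y) :=
        mle_antisymm M (hpmin (j := mmeet M p y) hm (mmeet_le_left M p y)) (mmeet_le_left M p y)
      simp only [id_eq] at he
      have h4 := mmeet_le_right M p y
      rw [← he] at h4
      exact h4
  have hexn : ∃ m, smul M m p = one M := ⟨n₀, hn₀⟩
  set n := Nat.find hexn with hndef
  have hn : smul M n p = one M := Nat.find_spec hexn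
  have hminn : ∀ m, m < n → smul M m p ≠ one M := fun m hm => Nat.find_min hexn hm
  have npos : 0 < n := by
    rcases Nat.eq_zero_or_pos n with h0 | h0
    · exfalso
      have hh := hn
      rw [h0] at hh
      exact hzne hh
    · exact h0
  have hge : ∀ m, n ≤ m → smul M m p = one M := by
    intro m hm
    obtain ⟨c, rfl⟩ := Nat.exists_eq_add_of_le hm
    rw [MVThm.smul_add, hn, one_oplus]
  have comp : ∀ (j : ℕ) (x : A), mle M (smul M j p) x ∨ mle M x (smul M j p) := by
    intro j
    induction j with
    | zero => intro x; exact Or.inl (zero_mle M x)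
    | succ k ih =>
      intro x
      rcases ih x with hkx | hxk
      · by_cases hy : msub M x (smul M k p) = M.zero
        · refine Or.inr (mle_trans M ((mle_iff_msub_zero M).mpr hy) ?_)
          exact mle_oplus_left M (smul M k p) p
        · refine Or.inl ?_
          have step := oplus_mle_oplus M (hple _ hy) (mle_refl M (smul M k p))
          have habs : M.oplus (msub M x (smul M k p)) (smul M k p) = x := by
            rw [show M.oplus (msub M x (smul M k p)) (smul M k p)
                = mjoin M x (smul M k p) from rfl, mjoin_comm]
            exact mjoin_eq_right M hkx
          rw [habs] at step
          exact step
      · exact Or.inr (mle_trans M hxk (mle_oplus_left M (smul M k p) p))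
  have U : ∀ i j, i ≤ n → j ≤ n → smul M i p = smul M j p → i = j := by
    have aux : ∀ i j, i < j → j ≤ n → smul M i p ≠ smul M j p := by
      intro i j hij hjn heq
      have h1 : smul M (i + 1) p = smul M i p :=
        mle_antisymm M (by rw [heq]; exact smul_mle M p (by omega))
          (smul_mle M p (Nat.le_succ i))
      have stab : ∀ m, i ≤ m → smul M m p = smul M i p := by
        intro m hm
        induction m, hm using Nat.le_induction with
        | base => rfl
        | succ m hm ih =>
          show M.oplus p (smul M m p) = smul M i p
          rw [ih]
          exact h1
      exact hminn i (by omega) (by rw [← stab n (by omega)]; exact hn)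
    intro i j hi hj heq
    rcases lt_trichotomy i j with hh | hh | hh
    · exact absurd heq (aux i j hh hj)
    · exact hh
    · exact absurd heq.symm (aux j i hh hi)
  have hrep : ∀ x : A, ∃ k, k ≤ n ∧ x = smul M k p := by
    intro x
    have hex : ∃ m, mle M x (smul M m p) := ⟨n, by rw [hn]; exact mle_one M x⟩
    obtain ⟨k, hk, hkmin, hkn⟩ :
        ∃ k, mle M x (smul M k p) ∧ (∀ m, m < k → ¬ mle M x (smul M m p)) ∧ k ≤ n :=
      ⟨Nat.find hex, Nat.find_spec hex, fun m hm => Nat.find_min hex hm,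
        Nat.find_min' hex (by rw [hn]; exact mle_one M x)⟩
    rcases k with _ | k'
    · exact ⟨0, Nat.zero_le n, mle_zero_eq M hk⟩
    · have hnot : ¬ mle M x (smul M k' p) := hkmin k' (Nat.lt_succ_self k')
      rcases comp k' x with hcase | hcase
      · have hy : msub M x (smul M k' p) ≠ M.zero := fun hz => hnot ((mle_iff_msub_zero M).mpr hz)
        have step := oplus_mle_oplus M (hple _ hy) (mle_refl M (smul M k' p))
        have habs : M.oplus (msub M x (smul M k' p)) (smul M k' p) = x := by
          rw [show M.oplus (msub M x (smul M k' p)) (smul M k' p)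
              = mjoin M x (smul M k' p) from rfl, mjoin_comm]
          exact mjoin_eq_right M hcase
        rw [habs] at step
        exact ⟨k' + 1, hkn, mle_antisymm M hk step⟩
      · exact absurd hcase hnot
  choose idx hidx using hrep
  have hidxle : ∀ x, idx x ≤ n := fun x => (hidx x).1
  have hidxval : ∀ x, x = smul M (idx x) p := fun x => (hidx x).2
  have hnegsmul : ∀ j, j ≤ n → M.neg (smul M j p) = smul M (n - j) p := by
    intro j hj
    have hv : M.neg (smul M j p) = smul M (idx (M.neg (smul M j p))) p := hidxval _
    set m := idx (M.neg (smul M j p)) with hmdef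
    have hm : m ≤ n := hidxle _
    have hone : smul M (m + j) p = one M := by
      rw [MVThm.smul_add, ← hv]
      exact neg_oplus_self M (smul M j p)
    have hge1 : n ≤ m + j := by
      by_contra hlt
      exact hminn _ (by omega) hone
    have hle1 : m + j ≤ n := by
      by_contra hgt
      push_neg at hgt
      have hm1 : 1 ≤ m := by omega
      have hbig : smul M (j + (m - 1)) p = one M := hge _ (by omega)
      have hle2 : mle M (M.neg (smul M j p)) (smul M (m - 1) p) := by
        show M.oplus (M.neg (M.neg (smul M j p))) (smul M (m - 1) p) = one M
        rw [M.mv4, ← MVThm.smul_add]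
        exact hbig
      rw [hv] at hle2
      have heq2 : smul M m p = smul M (m - 1) p :=
        mle_antisymm M hle2 (smul_mle M p (by omega))
      have := U m (m - 1) hm (by omega) heq2
      omega
    rw [hv]
    congr 1
    omega
  have smul_oplus_min : ∀ i j, i ≤ n → j ≤ n →
      M.oplus (smul M i p) (smul M j p) = smul M (min n (i + j)) p := by
    intro i j hi hj
    rw [← MVThm.smul_add]
    rcases le_or_gt (i + j) n with hle | hlt
    · rw [min_eq_right hle]
    · rw [min_eq_left (by omega), hge _ (by omega), hn]
  have nQ : ((n : ℕ) : ℚ) ≠ 0 := Nat.cast_ne_zero.mpr npos.ne'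
  refine ⟨⟨n, npos⟩, fun x => ⟨((idx x : ℕ) : ℚ) / ((n : ℕ) : ℚ), idx x, hidxle x, rfl⟩,
    ⟨?_, ?_⟩, ?_, ?_, ?_⟩
  · intro a b hab
    have h1 : ((idx a : ℕ) : ℚ) / ((n : ℕ) : ℚ) = ((idx b : ℕ) : ℚ) / ((n : ℕ) : ℚ) :=
      congrArg Subtype.val hab
    have h2 : idx a = idx b := by
      field_simp at h1
      exact_mod_cast h1
    rw [hidxval a, hidxval b, h2]
  · rintro ⟨q, k, hkn, hq⟩
    refine ⟨smul M k p, Subtype.ext ?_⟩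
    show ((idx (smul M k p) : ℕ) : ℚ) / ((n : ℕ) : ℚ) = q
    have hik : idx (smul M k p) = k := U _ _ (hidxle _) hkn (hidxval _).symm
    rw [hq, hik]
    rfl
  · intro x y
    apply Subtype.ext
    have hx := hidxval x
    have hy := hidxval y
    have hxy := hidxval (M.oplus x y)
    have hkey : smul M (idx (M.oplus x y)) p = smul M (min n (idx x + idx y)) p := by
      rw [← hxy]
      conv_lhs => rw [hx, hy]
      exact smul_oplus_min _ _ (hidxle x) (hidxle y)
    have hl : idx (M.oplus x y) = min n (idx x + idx y) :=
      U _ _ (hidxle _) (min_le_left n _) hkey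
    show ((idx (M.oplus x y) : ℕ) : ℚ) / ((n : ℕ) : ℚ)
        = min 1 (((idx x : ℕ) : ℚ) / ((n : ℕ) : ℚ) + ((idx y : ℕ) : ℚ) / ((n : ℕ) : ℚ))
    rw [hl, Nat.cast_min, Nat.cast_add,
      ← min_div_div_right (by positivity : (0 : ℚ) ≤ ((n : ℕ) : ℚ)), div_self nQ, ← add_div]
  · intro x
    apply Subtype.ext
    have hx := hidxval x
    have hnx : M.neg x = smul M (n - idx x) p := by
      conv_lhs => rw [hx]
      exact hnegsmul _ (hidxle x)
    have hl : idx (M.neg x) = n - idx x :=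
      U _ _ (hidxle _) (by omega) ((hidxval _).symm.trans hnx)
    show ((idx (M.neg x) : ℕ) : ℚ) / ((n : ℕ) : ℚ)
        = 1 - ((idx x : ℕ) : ℚ) / ((n : ℕ) : ℚ)
    rw [hl, Nat.cast_sub (hidxle x), sub_div, div_self nQ]
  · apply Subtype.ext
    have h0 : idx M.zero = 0 :=
      U _ _ (hidxle _) (Nat.zero_le n) (hidxval M.zero).symm
    show ((idx M.zero : ℕ) : ℚ) / ((n : ℕ) : ℚ) = 0
    rw [h0]
    simp
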